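/- Let N ≥ 1 be an integer and let a₀ : (0,∞) → (0,∞) be such that the map t ↦ t·a₀(t) is strictly increasing on (0,∞) and lim_{t→0⁺} t·a₀(t) = 0. Define a : ℝ^N → ℝ^N by a(ξ) = a₀(|ξ|)ξ for ξ ≠ 0 and a(0) = 0. Then a is strictly monotone: ⟨a(ξ) − a(η), ξ − η⟩ > 0 for all ξ, η ∈ ℝ^N with ξ ≠ η. -/
import Mathlib


open scoped RealInnerProductSpace

/-- Let `a₀ : (0,∞) → (0,∞)` be such that `t ↦ t·a₀(t)` is strictly increasing
on `(0,∞)` and `t·a₀(t) → 0` as `t → 0⁺`. Then the radial map `a(ξ) = a₀(|ξ|)ξ`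
(with `a(0) = 0`) is strictly monotone:
`⟨a(ξ) − a(η), ξ − η⟩ > 0` whenever `ξ ≠ η`. -/
theorem radial_map_strictMono
    {N : ℕ} (hN : 1 ≤ N)
    (a₀ : ℝ → ℝ) (ha₀pos : ∀ t : ℝ, 0 < t → 0 < a₀ t)
    (hmono : StrictMonoOn (fun t : ℝ => t * a₀ t) (Set.Ioi (0:ℝ)))
    (hlim : Filter.Tendsto (fun t : ℝ => t * a₀ t)
      (nhdsWithin 0 (Set.Ioi 0)) (nhds 0))
    (a : EuclideanSpace ℝ (Fin N) → EuclideanSpace ℝ (Fin N))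
    (ha0 : a 0 = 0)
    (ha : ∀ ξ : EuclideanSpace ℝ (Fin N), ξ ≠ 0 → a ξ = a₀ ‖ξ‖ • ξ) :
    ∀ ξ η : EuclideanSpace ℝ (Fin N), ξ ≠ η → 0 < ⟪a ξ - a η, ξ - η⟫ := by
  intro ξ η hne
  by_cases hξ : ξ = 0
  · subst hξ
    have hη : η ≠ 0 := fun h => hne h.symm
    have hs : 0 < ‖η‖ := norm_pos_iff.mpr hη
    rw [ha0, ha η hη]
    have h1 : ⟪(0 : EuclideanSpace ℝ (Fin N)) - a₀ ‖η‖ • η, 0 - η⟫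
        = a₀ ‖η‖ * ‖η‖ ^ 2 := by
      rw [zero_sub, zero_sub, inner_neg_neg, real_inner_smul_left,
        real_inner_self_eq_norm_sq]
    rw [h1]
    exact mul_pos (ha₀pos _ hs) (pow_pos hs 2)
  · by_cases hη : η = 0
    · subst hη
      have hr : 0 < ‖ξ‖ := norm_pos_iff.mpr hξ
      rw [ha0, ha ξ hξ]
      have h1 : ⟪a₀ ‖ξ‖ • ξ - (0 : EuclideanSpace ℝ (Fin N)), ξ - 0⟫
          = a₀ ‖ξ‖ * ‖ξ‖ ^ 2 := by
        rw [sub_zero, sub_zero, real_inner_smul_left,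
          real_inner_self_eq_norm_sq]
      rw [h1]
      exact mul_pos (ha₀pos _ hr) (pow_pos hr 2)
    · set r := ‖ξ‖ with hr_def
      set s := ‖η‖ with hs_def
      have hr : 0 < r := norm_pos_iff.mpr hξ
      have hs : 0 < s := norm_pos_iff.mpr hη
      set c := a₀ r with hc_def
      set d := a₀ s with hd_def
      have hc : 0 < c := ha₀pos _ hr
      have hd : 0 < d := ha₀pos _ hs
      set I := ⟪ξ, η⟫ with hI_def
      have key : ⟪a ξ - a η, ξ - η⟫
          = (c * r - d * s) * (r - s) + (c + d) * (r * s - I) := by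
        rw [ha ξ hξ, ha η hη]
        rw [inner_sub_left, inner_sub_right, inner_sub_right,
          real_inner_smul_left, real_inner_smul_left, real_inner_smul_left,
          real_inner_smul_left, real_inner_self_eq_norm_sq,
          real_inner_self_eq_norm_sq]
        rw [hI_def, real_inner_comm ξ η]
        ring
      rw [key]
      have hCS : I ≤ r * s := real_inner_le_norm ξ η
      rcases eq_or_ne r s with hrs | hrs
      · -- equal norms: second term strictly positive
        have hIlt : I < r * s := by
          rcases lt_or_eq_of_le hCS with h | h
          · exact h
          · exfalso
            have hsq : ‖ξ - η‖ ^ 2 = r ^ 2 - 2 * I + s ^ 2 := by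
              rw [norm_sub_sq_real]
            have h0 : ‖ξ - η‖ ^ 2 = 0 := by
              rw [hsq]; rw [hrs] at h ⊢; nlinarith
            have : ξ - η = 0 := by
              have := pow_eq_zero_iff (n := 2) (by norm_num) |>.mp h0
              exact norm_eq_zero.mp this
            exact hne (sub_eq_zero.mp this)
        have h1 : (c * r - d * s) * (r - s) = 0 := by rw [hrs]; ring
        rw [h1, zero_add]
        exact mul_pos (by linarith) (by linarith)
      · -- distinct norms: first term strictly positive
        have h1 : 0 < (c * r - d * s) * (r - s) := by
          rcases lt_or_gt_of_ne hrs with h | h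
          · have : r * a₀ r < s * a₀ s := hmono hr hs h
            apply mul_pos_of_neg_of_neg <;> [skip; linarith]
            simp only [hc_def, hd_def]; linarith
          · have : s * a₀ s < r * a₀ r := hmono hs hr h
            apply mul_pos <;> [skip; linarith]
            simp only [hc_def, hd_def]; linarith
        have h2 : 0 ≤ (c + d) * (r * s - I) :=
          mul_nonneg (by linarith) (by linarith)
        linarith
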